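/- The correctability condition [a, E_i† E_j] = 0 for all a ∈ A and all i, j is equivalent to the identity N̂ = N̂ ∘ P_{A'} between channels, where N̂ is a channel complementary to N and P_{A'} is the orthogonal projection onto the commutant of A. -/

import Mathlib

open Matrix Kronecker MeasureTheory
open scoped ComplexOrder

noncomputable section

/-- Square complex matrices of size `n`. -/
abbrev Mat (n : ℕ) := Matrix (Fin n) (Fin n) ℂ

/-- Operator norm (spectral norm) of a square matrix. -/
noncomputable def opNorm {m : Type*} [Fintype m] [DecidableEq m]
    (A : Matrix m m ℂ) : ℝ :=
  ‖Matrix.toEuclideanCLM (𝕜 := ℂ) A‖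

/-- Trace norm of a square matrix. -/
noncomputable def traceNorm {m : Type*} [Fintype m] [DecidableEq m]
    (A : Matrix m m ℂ) : ℝ :=
  (((Matrix.posSemidef_conjTranspose_mul_self A).1.eigenvectorUnitary : Matrix m m ℂ) *
    Matrix.diagonal (((↑) : ℝ → ℂ) ∘ Real.sqrt ∘ (Matrix.posSemidef_conjTranspose_mul_self A).1.eigenvalues) *
    (star ((Matrix.posSemidef_conjTranspose_mul_self A).1.eigenvectorUnitary : Matrix m m ℂ))).trace.re

/-- Trivial extension `Φ ⊗ id` of a map on matrices, defined entrywise. -/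
def extendId {a b : ℕ} (Φ : Mat a → Mat b) (m : ℕ)
    (M : Matrix (Fin a × Fin m) (Fin a × Fin m) ℂ) :
    Matrix (Fin b × Fin m) (Fin b × Fin m) ℂ :=
  Matrix.of fun r c => Φ (Matrix.of fun p q => M (p, r.2) (q, c.2)) r.1 c.1

/-- Diamond norm of a (difference of) map(s) `Mat a → Mat b`, with ancilla of
dimension equal to the input dimension. -/
noncomputable def dnorm {a b : ℕ} (Φ : Mat a → Mat b) : ℝ :=
  ⨆ ρ : {ρ : Matrix (Fin a × Fin a) (Fin a × Fin a) ℂ // ρ.PosSemidef ∧ ρ.trace = 1},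
    traceNorm (extendId Φ a ρ.1)

/-- A map is a quantum channel (CPTP) iff it admits a Kraus representation. -/
def IsCPTP {a b : ℕ} (Φ : Mat a → Mat b) : Prop :=
  ∃ (κ : ℕ) (K : Fin κ → Matrix (Fin b) (Fin a) ℂ),
    (∀ ρ, Φ ρ = ∑ i, K i * ρ * (K i)ᴴ) ∧ (∑ i, (K i)ᴴ * K i = 1)

/-- `Nh` is a complementary channel of `N` (with environment of dimension `e`). -/
def IsComplementary {a b e : ℕ} (N : Mat a → Mat b) (Nh : Mat a → Mat e) : Prop :=
  ∃ K : Fin e → Matrix (Fin b) (Fin a) ℂ,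
    (∀ ρ, N ρ = ∑ i, K i * ρ * (K i)ᴴ) ∧ (∑ i, (K i)ᴴ * K i = 1) ∧
    (∀ ρ, Nh ρ = Matrix.of fun i j => (K i * ρ * (K j)ᴴ).trace)

/-- The commutant of a set of matrices. -/
def commutant {n : ℕ} (A : Set (Mat n)) : Set (Mat n) :=
  {X | ∀ a ∈ A, a * X = X * a}

/-- `P` is the Hilbert–Schmidt-orthogonal projection onto the set `S`. -/
def IsHSProjectionOnto {n : ℕ} (P : Mat n → Mat n) (S : Set (Mat n)) : Prop :=
  (∀ X, P X ∈ S) ∧ (∀ X ∈ S, P X = X) ∧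
  (∀ X Y, ((P X)ᴴ * Y).trace = (Xᴴ * P Y).trace)

end


lemma eq_of_forall_trace' {n : ℕ} (M M' : Mat n)
    (h : ∀ ρ : Mat n, (M * ρ).trace = (M' * ρ).trace) : M = M' := by
  ext i j
  have := h (Matrix.single j i 1)
  simpa [Matrix.trace, Matrix.mul_apply, Matrix.single, Matrix.diag,
    ite_and, Finset.sum_ite_eq, Finset.sum_ite_eq', eq_comm] using this

/-- the commutation condition `[a, E_i†E_j] = 0` is equivalent to
`N̂ = N̂ ∘ P_{A'}`. -/
theorem stmt_10 {d b k : ℕ} (E : Fin k → Matrix (Fin b) (Fin d) ℂ)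
    (hE : ∑ i, (E i)ᴴ * E i = 1)
    (Nh : Mat d → Mat k)
    (hNh : ∀ ρ, Nh ρ = Matrix.of fun i j => (E i * ρ * (E j)ᴴ).trace)
    (A : StarSubalgebra ℂ (Mat d))
    (P' : Mat d → Mat d)
    (hP' : IsHSProjectionOnto P' (commutant (A : Set (Mat d)))) :
    (∀ a ∈ A, ∀ i j, a * ((E i)ᴴ * E j) = ((E i)ᴴ * E j) * a) ↔
      ∀ ρ, Nh ρ = Nh (P' ρ) := by
  obtain ⟨hmem, hfix, hadj⟩ := hP'
  constructor
  · intro hcomm ρ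
    rw [hNh ρ, hNh (P' ρ)]
    ext i j
    simp only [Matrix.of_apply]
    have hM : P' ((E j)ᴴ * E i)ᴴ = ((E j)ᴴ * E i)ᴴ := by
      apply hfix
      intro a ha
      rw [Matrix.conjTranspose_mul, Matrix.conjTranspose_conjTranspose]
      exact hcomm a ha i j
    have := hadj ((E j)ᴴ * E i)ᴴ ρ
    rw [hM, Matrix.conjTranspose_conjTranspose] at this
    calc (E i * ρ * (E j)ᴴ).trace = ((E j)ᴴ * E i * ρ).trace :=
          Matrix.trace_mul_cycle _ _ _
      _ = ((E j)ᴴ * E i * P' ρ).trace := this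
      _ = (E i * P' ρ * (E j)ᴴ).trace := (Matrix.trace_mul_cycle _ _ _).symm
  · intro h a ha i j
    set M : Mat d := (E i)ᴴ * E j with hMdef
    have key : ∀ ρ : Mat d, (M * ρ).trace = (M * P' ρ).trace := by
      intro ρ
      have h1 := congrArg (fun X => X j i)
        ((hNh ρ).symm.trans ((h ρ).trans (hNh (P' ρ))))
      simp only [Matrix.of_apply] at h1
      have e1 : (E j * ρ * (E i)ᴴ).trace = (M * ρ).trace :=
        Matrix.trace_mul_cycle _ _ _
      have e2 : (E j * P' ρ * (E i)ᴴ).trace = (M * P' ρ).trace :=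
        Matrix.trace_mul_cycle _ _ _
      rw [← e1, ← e2, h1]
    have hMeq : M = (P' Mᴴ)ᴴ := by
      apply eq_of_forall_trace'
      intro ρ
      have hthis := hadj Mᴴ ρ
      rw [Matrix.conjTranspose_conjTranspose] at hthis
      rw [key ρ, hthis]
    have hPM : P' Mᴴ = Mᴴ := by
      have h3 := congrArg Matrix.conjTranspose hMeq
      rw [Matrix.conjTranspose_conjTranspose] at h3
      exact h3.symm
    have hMH : Mᴴ ∈ commutant (A : Set (Mat d)) := hPM ▸ hmem Mᴴ
    have hstar : (star a) * Mᴴ = Mᴴ * (star a) := hMH (star a) (star_mem ha)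
    have := congrArg Matrix.conjTranspose hstar
    simpa [Matrix.conjTranspose_mul, Matrix.star_eq_conjTranspose] using this.symm
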